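/- Let R be a ring that is a finitely generated free module of rank r over its center C, and let α ∈ C be nonzero. Then R/Rα is a free module of rank r over C/Cα. Moreover, if Rα is a maximal twosided ideal of R, then C/Cα is a (commutative) field. -/

import Mathlib

/-- An Ore extension `R = D[X;σ,δ]`: `R` is a ring containing `D` via `C`, with a
distinguished element `X`, which is a free left `D`-module on the powers of `X`
(encoded by the coefficient equivalence `e`), subject to `X·a = σ(a)·X + δ(a)`,
where `δ` is a `σ`-derivation. -/
structure OreExt (D : Type*) [DivisionRing D] (σ : D ≃+* D) (δ : D → D)
    (R : Type*) [Ring R] where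
  C : D →+* R
  X : R
  e : R ≃+ (ℕ →₀ D)
  e_symm_single : ∀ (n : ℕ) (d : D), e.symm (Finsupp.single n d) = C d * X ^ n
  X_mul_C : ∀ a : D, X * C a = C (σ a) * X + C (δ a)
  δ_add : ∀ a b : D, δ (a + b) = δ a + δ b
  δ_mul : ∀ a b : D, δ (a * b) = σ a * δ b + δ a * b

namespace OreExt

variable {D R : Type*} [DivisionRing D] [Ring R] {σ : D ≃+* D} {δ : D → D}

/-- Degree, with `deg 0 = ⊥` (i.e. `-∞`). -/
noncomputable def deg (O : OreExt D σ δ R) (f : R) : WithBot ℕ := (O.e f).support.max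

/-- Degree as a natural number (`0` for the zero polynomial). -/
noncomputable def ndeg (O : OreExt D σ δ R) (f : R) : ℕ := ((O.e f).support.max).unbotD 0

/-- Leading coefficient. -/
noncomputable def lc (O : OreExt D σ δ R) (f : R) : D := O.e f (O.ndeg f)

/-- `f` is irreducible: it has positive degree and in any factorization one of the two
factors is a constant (an element of `D`). -/
def IrreducibleOre (O : OreExt D σ δ R) (f : R) : Prop :=
  0 < O.ndeg f ∧ ∀ g h : R, f = g * h → (∃ d : D, g = O.C d) ∨ (∃ d : D, h = O.C d)

end OreExt

/-- A left ideal is twosided. -/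
def IsTwoSidedIdeal' {R : Type*} [Ring R] (I : Ideal R) : Prop :=
  ∀ x ∈ I, ∀ r : R, x * r ∈ I

/-- `b` is a bound of `f`: the left ideal `Rb` is twosided and is the largest twosided
ideal contained in `Rf`. -/
def IsBound {R : Type*} [Ring R] (f b : R) : Prop :=
  Ideal.span {b} ≤ Ideal.span {f} ∧ IsTwoSidedIdeal' (Ideal.span {b}) ∧
    ∀ J : Ideal R, IsTwoSidedIdeal' J → J ≤ Ideal.span {f} → J ≤ Ideal.span {b}

section Aux
variable {R : Type*} [Ring R]

lemma center_comm' (c : Subring.center R) (x : R) : x * c = (c : R) * x :=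
  (Subring.mem_center_iff.mp c.2 x)

lemma key_unit' {r : ℕ} (bas : Module.Basis (Fin r) (Subring.center R) R) (i0 : Fin r) :
    ∃ c : Fin r → Subring.center R, ∑ i, c i * bas.repr 1 i = 1 := by
  set e := bas.repr 1 with he
  have h1 : bas i0 = ∑ i, e i • (bas i0 * bas i) := by
    conv_lhs => rw [← mul_one (bas i0), ← bas.sum_repr 1]
    rw [Finset.mul_sum]
    refine Finset.sum_congr rfl fun i _ => ?_
    show bas i0 * ((e i : R) * bas i) = (e i : R) * (bas i0 * bas i)
    rw [← mul_assoc, center_comm' (e i) (bas i0), mul_assoc]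
  have h2 := congrArg (fun f => bas.repr f i0) h1
  simp only [map_sum, map_smul, Finsupp.coe_finset_sum, Finset.sum_apply,
    Finsupp.smul_apply, smul_eq_mul, Module.Basis.repr_self, Finsupp.single_eq_same] at h2
  exact ⟨fun i => bas.repr (bas i0 * bas i) i0,
    by rw [h2]; exact Finset.sum_congr rfl fun i _ => mul_comm _ _⟩

/-- coordinates of a product `α • y` -/
lemma repr_central_mul {r : ℕ} (bas : Module.Basis (Fin r) (Subring.center R) R)
    (α : Subring.center R) (y : R) (j : Fin r) :
    bas.repr (y * α) j = α * bas.repr y j := by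
  rw [center_comm' α y]
  have : (α : R) * y = α • y := rfl
  rw [this, map_smul]
  simp

/-- `Rα ∩ C = Cα` -/
lemma center_inter {r : ℕ} (bas : Module.Basis (Fin r) (Subring.center R) R) (i0 : Fin r)
    (α γ : Subring.center R) (h : (γ : R) ∈ Ideal.span {(α : R)}) :
    γ ∈ Ideal.span {α} := by
  obtain ⟨y, hy⟩ := Submodule.mem_span_singleton.mp h
  have hy' : (γ : R) = y * (α : R) := by rw [← hy]; rfl
  obtain ⟨c, hc⟩ := key_unit' bas i0
  have coords : ∀ j, γ * bas.repr 1 j = α * bas.repr y j := by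
    intro j
    have h1 : (γ : R) = γ • (1 : R) := by simp [Subring.smul_def]
    have := congrArg (fun f => bas.repr f j) (h1.symm.trans hy')
    simpa [repr_central_mul bas α y j] using this
  have : γ = (∑ i, c i * bas.repr y i) * α := by
    calc γ = γ * ∑ i, c i * bas.repr 1 i := by rw [hc, mul_one]
    _ = ∑ i, c i * (γ * bas.repr 1 i) := by rw [Finset.mul_sum]; exact Finset.sum_congr rfl fun i _ => by ring
    _ = ∑ i, c i * (α * bas.repr y i) := by simp_rw [coords]
    _ = (∑ i, c i * bas.repr y i) * α := by rw [Finset.sum_mul]; exact Finset.sum_congr rfl fun i _ => by ring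
  rw [this]
  exact Ideal.mul_mem_left _ _ (Ideal.subset_span rfl)

end Aux


/-- if `R` is a free module of rank `r` over its center `C` and
`α ∈ C` is nonzero, then `R/Rα` is free of rank `r` over `C/Cα` (encoded: there are
`r` elements whose classes span `R/Rα` over `C` and are independent modulo `Cα`);
moreover if `Rα` is a maximal twosided ideal then `C/Cα` is a field. -/
theorem quotient_free_of_free {R : Type*} [Ring R] (r : ℕ)
    (bas : Module.Basis (Fin r) (Subring.center R) R)
    (α : Subring.center R) (hα : α ≠ 0) :
    (∃ v : Fin r → R,
      (∀ x : R, ∃ c : Fin r → Subring.center R,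
        x - ∑ i, (c i : R) * v i ∈ Ideal.span {(α : R)}) ∧
      (∀ c : Fin r → Subring.center R,
        (∑ i, (c i : R) * v i) ∈ Ideal.span {(α : R)} →
          ∀ i, c i ∈ Ideal.span {α})) ∧
    (((Ideal.span {(α : R)} : Ideal R) ≠ ⊤ ∧
        ∀ J : Ideal R, IsTwoSidedIdeal' J → Ideal.span {(α : R)} < J → J = ⊤) →
      IsField (Subring.center R ⧸ (Ideal.span {α} : Ideal (Subring.center R)))) := by
  -- r = 0 is impossible
  rcases Nat.eq_zero_or_pos r with hr | hr
  · exfalso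
    subst hr
    have hsub : Subsingleton R := ⟨fun a b => by
      have := congrArg bas.repr.symm (Subsingleton.elim (bas.repr a) (bas.repr b))
      simpa using this⟩
    exact hα (Subtype.ext (hsub.elim _ _))
  set i0 : Fin r := ⟨0, hr⟩
  have hsum : ∀ (c : Fin r → Subring.center R), (∑ i, (c i : R) * bas i) = ∑ i, c i • bas i :=
    fun c => rfl
  constructor
  · refine ⟨fun i => bas i, fun x => ⟨fun i => bas.repr x i, ?_⟩, fun c hc i => ?_⟩
    · rw [hsum, bas.sum_repr x, sub_self]
      exact Submodule.zero_mem _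
    · -- independence
      rw [hsum] at hc
      obtain ⟨y, hy⟩ := Submodule.mem_span_singleton.mp hc
      have hy' : (∑ j, c j • bas j) = y * (α : R) := by rw [← hy]; rfl
      have h2 := congrArg (fun f => bas.repr f i) hy'
      simp only [map_sum, map_smul, Finsupp.coe_finset_sum, Finset.sum_apply,
        Finsupp.smul_apply, smul_eq_mul, Module.Basis.repr_self] at h2
      rw [Finset.sum_eq_single i (fun j _ hj => by simp [Finsupp.single_apply, hj])
        (fun h => absurd (Finset.mem_univ i) h)] at h2
      simp only [Finsupp.single_eq_same, mul_one] at h2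
      rw [h2, repr_central_mul bas α y i]
      exact Ideal.mul_mem_right _ _ (Ideal.subset_span rfl)
  · rintro ⟨hne, hmax⟩
    obtain ⟨c, hc⟩ := key_unit' bas i0
    have hCα_ne : (Ideal.span {α} : Ideal (Subring.center R)) ≠ ⊤ := by
      intro h
      apply hne
      rw [Ideal.eq_top_iff_one] at h ⊢
      obtain ⟨d, hd⟩ := Submodule.mem_span_singleton.mp h
      have : (d : R) * (α : R) = 1 := by
        have := congrArg (Subtype.val) (show d • α = 1 from hd)
        simpa using this
      rw [← this]
      exact Ideal.mul_mem_left _ _ (Ideal.subset_span rfl)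
    haveI := Ideal.Quotient.nontrivial_iff.mpr hCα_ne
    refine ⟨exists_pair_ne _, mul_comm, ?_⟩
    intro a ha
    obtain ⟨β, rfl⟩ := Ideal.Quotient.mk_surjective a
    have hβ : β ∉ (Ideal.span {α} : Ideal (Subring.center R)) := by
      intro h; exact ha (Ideal.Quotient.eq_zero_iff_mem.mpr h)
    -- the two-sided ideal J = Rα + Rβ
    set J : Ideal R := Ideal.span {(α : R), (β : R)} with hJ
    have hJ2 : IsTwoSidedIdeal' J := by
      intro x hx z
      obtain ⟨u, w, huw⟩ := Submodule.mem_span_pair.mp hx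
      have : x * z = (u * z) • (α : R) + (w * z) • (β : R) := by
        rw [← huw]; simp only [smul_eq_mul, add_mul]
        rw [mul_assoc, mul_assoc, mul_assoc, mul_assoc,
          center_comm' α z, center_comm' β z]
      rw [this]
      exact Submodule.mem_span_pair.mpr ⟨u * z, w * z, rfl⟩
    have hle : Ideal.span {(α : R)} ≤ J :=
      Ideal.span_mono (Set.singleton_subset_iff.mpr (by simp))
    have hne' : Ideal.span {(α : R)} ≠ J := by
      intro h
      apply hβ
      refine center_inter bas i0 α β ?_
      rw [h]
      exact Ideal.subset_span (by simp)
    have hJtop : J = ⊤ := hmax J hJ2 (lt_of_le_of_ne hle hne')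
    have h1 : (1 : R) ∈ J := hJtop ▸ Submodule.mem_top
    obtain ⟨x, y, hxy⟩ := Submodule.mem_span_pair.mp h1
    -- coordinates
    have coords : ∀ j, bas.repr 1 j = α * bas.repr x j + β * bas.repr y j := by
      intro j
      have hxy' : x * (α : R) + y * (β : R) = 1 := by rw [← hxy]; rfl
      have := congrArg (fun f => bas.repr f j) hxy'.symm
      simpa [repr_central_mul] using this
    have key : (1 : Subring.center R) =
        α * (∑ i, c i * bas.repr x i) + β * (∑ i, c i * bas.repr y i) := by
      calc (1 : Subring.center R) = ∑ i, c i * bas.repr 1 i := hc.symm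
      _ = ∑ i, (α * (c i * bas.repr x i) + β * (c i * bas.repr y i)) := by
          refine Finset.sum_congr rfl fun i _ => ?_; rw [coords i]; ring
      _ = _ := by rw [Finset.sum_add_distrib, Finset.mul_sum, Finset.mul_sum]
    refine ⟨Ideal.Quotient.mk _ (∑ i, c i * bas.repr y i), ?_⟩
    have hmem : β * (∑ i, c i * bas.repr y i) - 1 ∈
        (Ideal.span {α} : Ideal (Subring.center R)) := by
      have : β * (∑ i, c i * bas.repr y i) - 1 =
          (-(∑ i, c i * bas.repr x i)) * α := by rw [key]; ring
      rw [this]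
      exact Ideal.mul_mem_left _ _ (Ideal.subset_span rfl)
    calc Ideal.Quotient.mk (Ideal.span {α}) β * Ideal.Quotient.mk (Ideal.span {α}) (∑ i, c i * bas.repr y i)
        = Ideal.Quotient.mk (Ideal.span {α}) (β * (∑ i, c i * bas.repr y i)) := rfl
      _ = Ideal.Quotient.mk (Ideal.span {α}) 1 := (Ideal.Quotient.mk_eq_mk_iff_sub_mem _ _).mpr hmem
      _ = 1 := map_one _
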